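/- Assume V⁺ admits a monomial parametrization with exponent matrix A (data p, A, K, ψ) and that the cone generator matrix E has no zero row. Then the following are equivalent: (i) the network admits multistationarity; (ii) there exist x ∈ ℝ_{>0}^n and ξ ∈ ℝ_{>0}^{n−p} with ξ ≠ 𝟙 such that Z(x − x⋆ξ^A) = 0; (iii) there exist x ∈ ℝ_{>0}^n and κ ∈ ℝ^{n−p} with κ ≠ 0 such that Z(x − x⋆(e^κ)^A) = 0, where e^κ is taken componentwise. -/

import Mathlib

open Matrix

noncomputable section

/-- The monomial map φ: `phi Y x j = ∏ i, x i ^ Y i j`. -/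
def phi {n r : ℕ} (Y : Matrix (Fin n) (Fin r) ℕ) (x : Fin n → ℝ) : Fin r → ℝ :=
  fun j => ∏ i, x i ^ Y i j

/-- The positive steady state variety V⁺. -/
def Vplus {n r : ℕ} (Y : Matrix (Fin n) (Fin r) ℕ) (S : Matrix (Fin n) (Fin r) ℝ) :
    Set ((Fin r → ℝ) × (Fin n → ℝ)) :=
  {p | (∀ j, 0 < p.1 j) ∧ (∀ i, 0 < p.2 i) ∧
    S.mulVec (fun j => p.1 j * phi Y p.2 j) = 0}

/-- `E` is a cone generator matrix for `S`:
`E` is nonnegative and `ker S ∩ ℝ_{≥0}^r = {Eλ : λ ≥ 0}`. -/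
def IsConeGenMatrix {n r d : ℕ} (S : Matrix (Fin n) (Fin r) ℝ)
    (E : Matrix (Fin r) (Fin d) ℝ) : Prop :=
  (∀ j l, 0 ≤ E j l) ∧
  {v : Fin r → ℝ | S.mulVec v = 0 ∧ ∀ j, 0 ≤ v j} =
    {v : Fin r → ℝ | ∃ lam : Fin d → ℝ, (∀ l, 0 ≤ lam l) ∧ v = E.mulVec lam}

/-- The coefficient cone Λ(E). -/
def Lambda {r d : ℕ} (E : Matrix (Fin r) (Fin d) ℝ) : Set (Fin d → ℝ) :=
  {lam | (∀ l, 0 ≤ lam l) ∧ ∀ j, 0 < E.mulVec lam j}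

/-- `ξ^B`: for a rational `q × m` matrix `B`, `(ξ^B) j = ∏ i, ξ i ^ (B i j)` (real powers). -/
def vecPow {q m : ℕ} (ξ : Fin q → ℝ) (B : Matrix (Fin q) (Fin m) ℚ) : Fin m → ℝ :=
  fun j => ∏ i, ξ i ^ ((B i j : ℝ))

/-- V⁺ admits a monomial parametrization with exponent matrix `A` (data `p`, `A`, `K`, `ψ`). -/
def IsMonomialParamExp {n r : ℕ} (Y : Matrix (Fin n) (Fin r) ℕ)
    (S : Matrix (Fin n) (Fin r) ℝ) (p : ℕ) (A : Matrix (Fin (n - p)) (Fin n) ℚ)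
    (K : Set (Fin r → ℝ)) (ψ : (Fin r → ℝ) → (Fin n → ℝ)) : Prop :=
  p < n ∧ A.rank = n - p ∧ (∀ k ∈ K, ∀ j, 0 < k j) ∧ (∀ k ∈ K, ∀ i, 0 < ψ k i) ∧
  ∀ k x, (∀ j : Fin r, 0 < k j) → (∀ i : Fin n, 0 < x i) →
    ((k, x) ∈ Vplus Y S ↔ k ∈ K ∧
      ∃ ξ : Fin (n - p) → ℝ, (∀ l, 0 < ξ l) ∧ x = fun i => ψ k i * vecPow ξ A i)

/-- `Z` is a conservation matrix for `S` (with `s = rank S`):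
its rows form a basis of the left kernel of `S`. -/
def IsConservationMatrix {n r : ℕ} (S : Matrix (Fin n) (Fin r) ℝ) (s : ℕ)
    (Z : Matrix (Fin (n - s)) (Fin n) ℝ) : Prop :=
  S.rank = s ∧ s < n ∧ LinearIndependent ℝ (fun i => Z i) ∧
    Submodule.span ℝ (Set.range (fun i => Z i)) = LinearMap.ker S.vecMulLinear

/-- `im₊(Z) = {Zx : x ≥ 0}`. -/
def imPos {m n : ℕ} (Z : Matrix (Fin m) (Fin n) ℝ) : Set (Fin m → ℝ) :=
  {c | ∃ x : Fin n → ℝ, (∀ i, 0 ≤ x i) ∧ c = Z.mulVec x}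

/-- The real row space of a rational matrix. -/
def rowSpace {q m : ℕ} (A : Matrix (Fin q) (Fin m) ℚ) : Submodule ℝ (Fin m → ℝ) :=
  Submodule.span ℝ (Set.range (fun l => fun i => ((A l i : ℝ))))

/-- The column space (image) of `S`. -/
def colSpace {n r : ℕ} (S : Matrix (Fin n) (Fin r) ℝ) : Submodule ℝ (Fin n → ℝ) :=
  LinearMap.range S.mulVecLin

/-- Componentwise sign of a vector. -/
def signVec {m : ℕ} (v : Fin m → ℝ) : Fin m → ℝ := fun i => Real.sign (v i)


lemma vecPow_pos {q m : ℕ} {ξ : Fin q → ℝ} (hξ : ∀ l, 0 < ξ l)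
    (B : Matrix (Fin q) (Fin m) ℚ) (j : Fin m) : 0 < vecPow ξ B j :=
  Finset.prod_pos fun i _ => Real.rpow_pos_of_pos (hξ i) _

lemma vecPow_mul {q m : ℕ} {ξ η : Fin q → ℝ} (hξ : ∀ l, 0 < ξ l) (hη : ∀ l, 0 < η l)
    (B : Matrix (Fin q) (Fin m) ℚ) (j : Fin m) :
    vecPow (fun l => ξ l * η l) B j = vecPow ξ B j * vecPow η B j := by
  simp only [vecPow, ← Finset.prod_mul_distrib]
  exact Finset.prod_congr rfl fun i _ => Real.mul_rpow (hξ i).le (hη i).le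

lemma exists_right_inverse_of_rank {q m : ℕ} (B : Matrix (Fin q) (Fin m) ℚ)
    (hB : B.rank = q) : ∃ C : Matrix (Fin m) (Fin q) ℚ, B * C = 1 := by
  have hsurj : Function.Surjective B.mulVecLin := by
    rw [← LinearMap.range_eq_top]
    apply Submodule.eq_top_of_finrank_eq
    rw [← Matrix.rank, hB]
    simp
  choose c hc using fun i : Fin q => hsurj (Pi.single i 1)
  refine ⟨Matrix.of fun j i => c i j, ?_⟩
  ext k i
  have h1 : (B * Matrix.of fun j i => c i j) k i = B.mulVecLin (c i) k := by
    simp [Matrix.mul_apply, Matrix.mulVec, dotProduct]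
  rw [h1, hc]
  simp [Matrix.one_apply, Pi.single_apply, eq_comm]

lemma vecPow_eq_one {q m : ℕ} (B : Matrix (Fin q) (Fin m) ℚ) (hB : B.rank = q)
    {ξ : Fin q → ℝ} (hξ : ∀ l, 0 < ξ l) (h : ∀ j, vecPow ξ B j = 1) :
    ξ = fun _ => 1 := by
  obtain ⟨C, hC⟩ := exists_right_inverse_of_rank B hB
  set u : Fin q → ℝ := fun l => Real.log (ξ l) with hu
  have hMu : ∀ j, ∑ l, (B l j : ℝ) * u l = 0 := by
    intro j
    have h0 := congrArg Real.log (h j)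
    rw [Real.log_one] at h0
    unfold vecPow at h0
    rw [Real.log_prod (fun i _ => (Real.rpow_pos_of_pos (hξ i) _).ne')] at h0
    simpa [Real.log_rpow (hξ _), mul_comm] using h0
  have key : ∀ i, u i = 0 := by
    intro i
    have h1 : ∑ j, (∑ l, (B l j : ℝ) * u l) * (C j i : ℝ) = 0 := by
      simp [hMu]
    have h2 : (∑ j, (∑ l, (B l j : ℝ) * u l) * (C j i : ℝ))
        = ∑ l, u l * (((B * C) l i : ℚ) : ℝ) := by
      simp only [Finset.sum_mul, Matrix.mul_apply]
      push_cast
      rw [Finset.sum_comm]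
      refine Finset.sum_congr rfl fun l _ => ?_
      rw [Finset.mul_sum]
      exact Finset.sum_congr rfl fun j _ => by ring
    rw [h1, hC] at h2
    have h3 : (0:ℝ) = ∑ l, u l * (if l = i then 1 else 0) := by
      simpa [Matrix.one_apply, apply_ite] using h2
    simpa [Finset.sum_ite_eq'] using h3.symm
  funext l
  have h3 := Real.exp_log (hξ l)
  rw [show Real.log (ξ l) = 0 from key l, Real.exp_zero] at h3
  exact h3.symm

/-- characterization of multistationarity via the exponent matrix,
independent of the rate constants. -/
theorem multistationarity_iff_xi_kernel {n r d s p : ℕ} (hn : 1 ≤ n) (hr : 1 ≤ r)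
    (Y : Matrix (Fin n) (Fin r) ℕ) (S : Matrix (Fin n) (Fin r) ℝ)
    (A : Matrix (Fin (n - p)) (Fin n) ℚ) (K : Set (Fin r → ℝ))
    (ψ : (Fin r → ℝ) → (Fin n → ℝ)) (hparam : IsMonomialParamExp Y S p A K ψ)
    (E : Matrix (Fin r) (Fin d) ℝ) (hE : IsConeGenMatrix S E)
    (hrow : ∀ j, ∃ l, E j l ≠ 0)
    (Z : Matrix (Fin (n - s)) (Fin n) ℝ) (hZ : IsConservationMatrix S s Z) :
    ((∃ k : Fin r → ℝ, (∀ j, 0 < k j) ∧ ∃ a b : Fin n → ℝ, a ≠ b ∧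
        (k, a) ∈ Vplus Y S ∧ (k, b) ∈ Vplus Y S ∧ Z.mulVec a = Z.mulVec b) ↔
      (∃ x : Fin n → ℝ, (∀ i, 0 < x i) ∧ ∃ ξ : Fin (n - p) → ℝ, (∀ l, 0 < ξ l) ∧
        ξ ≠ (fun _ => 1) ∧ Z.mulVec (fun i => x i - x i * vecPow ξ A i) = 0)) ∧
    ((∃ x : Fin n → ℝ, (∀ i, 0 < x i) ∧ ∃ ξ : Fin (n - p) → ℝ, (∀ l, 0 < ξ l) ∧
        ξ ≠ (fun _ => 1) ∧ Z.mulVec (fun i => x i - x i * vecPow ξ A i) = 0) ↔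
      (∃ x : Fin n → ℝ, (∀ i, 0 < x i) ∧ ∃ κ : Fin (n - p) → ℝ, κ ≠ 0 ∧
        Z.mulVec (fun i =>
          x i - x i * vecPow (fun l => Real.exp (κ l)) A i) = 0)) := by
  obtain ⟨hp, hArank, hKpos, hψpos, hiff⟩ := hparam
  constructor
  · constructor
    · rintro ⟨k, hk, a, b, hab, ha, hb, hZab⟩
      have hapos := ha.2.1
      have hbpos := hb.2.1
      obtain ⟨hkK, ξ₁, hξ₁, ha_eq⟩ := (hiff k a hk hapos).mp ha
      obtain ⟨-, ξ₂, hξ₂, hb_eq⟩ := (hiff k b hk hbpos).mp hb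
      refine ⟨a, hapos, fun l => ξ₂ l / ξ₁ l,
        fun l => div_pos (hξ₂ l) (hξ₁ l), ?_, ?_⟩
      · intro hone
        apply hab
        have hξeq : ξ₂ = ξ₁ := by
          funext l
          have h4 := congrFun hone l
          exact (div_eq_one_iff_eq (hξ₁ l).ne').mp h4
        rw [ha_eq, hb_eq, hξeq]
      · have hmulc : (fun l => ξ₁ l * (ξ₂ l / ξ₁ l)) = ξ₂ :=
          funext fun l => mul_div_cancel₀ _ (hξ₁ l).ne'
        have hba : ∀ i, a i * vecPow (fun l => ξ₂ l / ξ₁ l) A i = b i := by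
          intro i
          rw [congrFun ha_eq i, congrFun hb_eq i, mul_assoc,
            ← vecPow_mul hξ₁ (fun l => div_pos (hξ₂ l) (hξ₁ l)) A i, hmulc]
        have heq : (fun i => a i - a i * vecPow (fun l => ξ₂ l / ξ₁ l) A i) = a - b :=
          funext fun i => by rw [hba i]; rfl
        rw [heq, Matrix.mulVec_sub, hZab, sub_self]
    · rintro ⟨x, hx, ξ, hξ, hξ1, hZ0⟩
      have hmem : E.mulVec (fun _ => 1) ∈
          {v : Fin r → ℝ | S.mulVec v = 0 ∧ ∀ j, 0 ≤ v j} := by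
        rw [hE.2]; exact ⟨fun _ => 1, fun _ => zero_le_one, rfl⟩
      obtain ⟨hSv, hvnn⟩ := hmem
      have hvpos : ∀ j, 0 < E.mulVec (fun _ => 1) j := by
        intro j
        obtain ⟨l, hl⟩ := hrow j
        have hsum : E.mulVec (fun _ => 1) j = ∑ l, E j l := by
          simp [Matrix.mulVec, dotProduct]
        rw [hsum]
        exact Finset.sum_pos' (fun i _ => hE.1 j i)
          ⟨l, Finset.mem_univ l, (hE.1 j l).lt_of_ne (Ne.symm hl)⟩
      have hphipos : ∀ j, 0 < phi Y x j :=
        fun j => Finset.prod_pos fun i _ => pow_pos (hx i) _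
      set k : Fin r → ℝ := fun j => E.mulVec (fun _ => 1) j / phi Y x j with hkdef
      have hk : ∀ j, 0 < k j := fun j => div_pos (hvpos j) (hphipos j)
      have hmemx : (k, x) ∈ Vplus Y S := by
        refine ⟨hk, hx, ?_⟩
        have hfun : (fun j => k j * phi Y x j) = E.mulVec (fun _ => 1) :=
          funext fun j => div_mul_cancel₀ _ (hphipos j).ne'
        show S.mulVec (fun j => k j * phi Y x j) = 0
        rw [hfun]; exact hSv
      obtain ⟨hkK, ξ₁, hξ₁, hx_eq⟩ := (hiff k x hk hx).mp hmemx
      set b : Fin n → ℝ := fun i => ψ k i * vecPow (fun l => ξ₁ l * ξ l) A i with hbdef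
      have hξ₁ξ : ∀ l, 0 < ξ₁ l * ξ l := fun l => mul_pos (hξ₁ l) (hξ l)
      have hbpos : ∀ i, 0 < b i :=
        fun i => mul_pos (hψpos k hkK i) (vecPow_pos hξ₁ξ A i)
      have hmemb : (k, b) ∈ Vplus Y S :=
        (hiff k b hk hbpos).mpr ⟨hkK, _, hξ₁ξ, rfl⟩
      have hbx : ∀ i, b i = x i * vecPow ξ A i := by
        intro i
        rw [hbdef]
        show ψ k i * vecPow (fun l => ξ₁ l * ξ l) A i = x i * vecPow ξ A i
        rw [vecPow_mul hξ₁ hξ A i, congrFun hx_eq i, mul_assoc]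
      have hneq : x ≠ b := by
        intro hxb
        apply hξ1
        apply vecPow_eq_one A hArank hξ
        intro j
        have h4 := congrFun hxb j
        rw [hbx j] at h4
        rcases mul_right_eq_self₀.mp h4.symm with h5 | h5
        · exact h5
        · exact absurd h5 (hx j).ne'
      have heq : (fun i => x i - x i * vecPow ξ A i) = x - b :=
        funext fun i => by rw [show (x - b) i = x i - b i from rfl, hbx i]
      rw [heq, Matrix.mulVec_sub] at hZ0
      exact ⟨k, hk, x, b, hneq, hmemx, hmemb, sub_eq_zero.mp hZ0⟩
  · constructor
    · rintro ⟨x, hx, ξ, hξ, hξ1, hZ0⟩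
      refine ⟨x, hx, fun l => Real.log (ξ l), ?_, ?_⟩
      · intro hκ
        apply hξ1
        funext l
        have h3 := Real.exp_log (hξ l)
        rw [show Real.log (ξ l) = 0 from congrFun hκ l, Real.exp_zero] at h3
        exact h3.symm
      · have hfun : (fun l => Real.exp (Real.log (ξ l))) = ξ :=
          funext fun l => Real.exp_log (hξ l)
        rw [hfun]; exact hZ0
    · rintro ⟨x, hx, κ, hκ, hZ0⟩
      refine ⟨x, hx, fun l => Real.exp (κ l), fun l => Real.exp_pos _, ?_, hZ0⟩
      intro h1
      apply hκ
      funext l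
      have h2 := congrFun h1 l
      have h3 : κ l = 0 := by rwa [Real.exp_eq_one_iff] at h2
      simpa using h3
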